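/- arXiv:1905.00101 — 4 statements merged into one kernel-verified Lean document; each statement's English description precedes it below -/
import Mathlib

section
/- Let n ≥ 1, let ℱ be a nonempty finite family of nonempty subsets of ℝⁿ, each S ∈ ℱ assigned a number ℓ(S) > 0, and define d_ℱ(x) := inf_{S∈ℱ}(ℓ(S) + dist(x,S)) for x ∈ ℝⁿ and d_ℱ(I) := inf_{x∈I} d_ℱ(x) for a dyadic cube I. Let 0 < τ < 1/(2√n) and let 𝒞_ℱ be the collection of maximal dyadic cubes I of ℝⁿ satisfying ℓ(I) < τ d_ℱ(I), where ℓ(I) denotes the sidelength of I. Then every I ∈ 𝒞_ℱ satisfies τ d_ℱ(I)/(2(1+√n)) ≤ ℓ(I) < τ d_ℱ(I). -/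
set_option maxHeartbeats 1000000


open MeasureTheory Metric Set
open scoped ENNReal NNReal

noncomputable section

namespace QCMGP

abbrev Euc (n : ℕ) := EuclideanSpace ℝ (Fin n)

/-- The `d`-dimensional Hausdorff content `ℋ^d_∞`. -/
def hcontent (n : ℕ) (d : ℝ) (A : Set (Euc n)) : ℝ≥0∞ :=
  ⨅ (U : ℕ → Set (Euc n)) (_ : A ⊆ ⋃ i, U i), ∑' i, EMetric.diam (U i) ^ d

/-- `E` is `(c,d)`-lower content regular: `ℋ^d_∞(E ∩ B(x,r)) ≥ c rᵈ` for all `x ∈ E`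
and `0 < r < diam E`. -/
def LowerContentRegular (n : ℕ) (c d : ℝ) (E : Set (Euc n)) : Prop :=
  ∀ x ∈ E, ∀ r : ℝ, 0 < r → ENNReal.ofReal r < EMetric.diam E →
    ENNReal.ofReal c * ENNReal.ofReal r ^ d ≤ hcontent n d (E ∩ ball x r)

/-- Normalized local Hausdorff distance `d_B(A,B)` for the ball `B = B(x,r)`
(the factor `2 / diam B` equals `r⁻¹`). -/
def ndist (n : ℕ) (x : Euc n) (r : ℝ) (A B : Set (Euc n)) : ℝ :=
  r⁻¹ * max (⨆ y : ↥(A ∩ ball x r), Metric.infDist y.1 B)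
            (⨆ y : ↥(B ∩ ball x r), Metric.infDist y.1 A)

/-- `L` is a `d`-plane: a nonempty `d`-dimensional affine subspace. -/
def IsPlane (n d : ℕ) (L : AffineSubspace ℝ (Euc n)) : Prop :=
  (L : Set (Euc n)).Nonempty ∧ Module.finrank ℝ L.direction = d

/-- `U` is a union of `d`-planes. -/
def IsUnionOfPlanes (n d : ℕ) (U : Set (Euc n)) : Prop :=
  ∃ Ps : Set (AffineSubspace ℝ (Euc n)),
    (∀ L ∈ Ps, IsPlane n d L) ∧ U = ⋃ L ∈ Ps, (L : Set (Euc n))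

/-- `β_E^{d,p}(B(x,r), L)`. -/
def betaPlane (n d : ℕ) (p : ℝ) (E : Set (Euc n)) (x : Euc n) (r : ℝ)
    (L : AffineSubspace ℝ (Euc n)) : ℝ≥0∞ :=
  ((ENNReal.ofReal r ^ (d : ℝ))⁻¹ *
    ∫⁻ t in Set.Ioo (0 : ℝ) 1,
      hcontent n d {y | y ∈ ball x r ∩ E ∧ t * r < Metric.infDist y (L : Set (Euc n))} *
        ENNReal.ofReal (t ^ (p - 1))) ^ (1 / p)

/-- `β_E^{d,p}(B(x,r))`. -/
def beta (n d : ℕ) (p : ℝ) (E : Set (Euc n)) (x : Euc n) (r : ℝ) : ℝ≥0∞ :=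
  ⨅ (L : AffineSubspace ℝ (Euc n)) (_ : IsPlane n d L), betaPlane n d p E x r L

/-- A system of Christ–David cubes for `E`, with parameter `ρ ∈ (0,1/1000)` and
`c₀ = 1/500`.  A cube is recorded together with its scale `k`; its sidelength is
`ℓ(Q) = 5 ρ^k`. -/
structure CDS (n : ℕ) (E : Set (Euc n)) where
  ρ : ℝ
  ρ_pos : 0 < ρ
  ρ_small : ρ < 1 / 1000
  cubes : Set (ℤ × Set (Euc n))
  center : ℤ × Set (Euc n) → Euc n
  borel : ∀ Q ∈ cubes, MeasurableSet Q.2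
  subset_amb : ∀ Q ∈ cubes, Q.2 ⊆ E
  cover : ∀ k : ℤ, ∀ x ∈ E, ∃! Q, Q ∈ cubes ∧ Q.1 = k ∧ x ∈ Q.2
  nested : ∀ Q ∈ cubes, ∀ Q' ∈ cubes, (Q.2 ∩ Q'.2).Nonempty → Q.2 ⊆ Q'.2 ∨ Q'.2 ⊆ Q.2
  center_mem : ∀ Q ∈ cubes, center Q ∈ Q.2
  ball_subset : ∀ Q ∈ cubes, ball (center Q) ((1 / 500) * (5 * ρ ^ Q.1)) ∩ E ⊆ Q.2
  subset_ball : ∀ Q ∈ cubes, Q.2 ⊆ ball (center Q) (5 * ρ ^ Q.1)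

/-- The sidelength `ℓ(Q) = 5 ρ^k` of a cube. -/
def CDS.len {n : ℕ} {E : Set (Euc n)} (𝒟 : CDS n E) (Q : ℤ × Set (Euc n)) : ℝ :=
  5 * 𝒟.ρ ^ Q.1

/-- `β_{E,A,p}(R) = ℓ(R)^d + Σ_{Q ⊆ R} β_E^{d,p}(A B_Q)² ℓ(Q)^d`. -/
def CDS.betaSum {n : ℕ} {E : Set (Euc n)} (𝒟 : CDS n E) (d : ℕ) (A p : ℝ)
    (R : ℤ × Set (Euc n)) : ℝ≥0∞ :=
  ENNReal.ofReal (𝒟.len R) ^ (d : ℝ) +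
    ∑' Q : {Q : ℤ × Set (Euc n) // Q ∈ 𝒟.cubes ∧ Q.2 ⊆ R.2},
      beta n d p E (𝒟.center Q.1) (A * 𝒟.len Q.1) ^ 2 *
        ENNReal.ofReal (𝒟.len Q.1) ^ (d : ℝ)

/-- `Σ_{Q ⊆ R, Q bad} ℓ(Q)^d`, the sum of `ℓ(Q)^d` over the subcubes of `R`
satisfying the "bad cube" condition `P`. -/
def CDS.badSum {n : ℕ} {E : Set (Euc n)} (𝒟 : CDS n E) (d : ℕ)
    (R : ℤ × Set (Euc n)) (P : ℤ × Set (Euc n) → Prop) : ℝ≥0∞ :=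
  ∑' Q : {Q : ℤ × Set (Euc n) // Q ∈ 𝒟.cubes ∧ Q.2 ⊆ R.2 ∧ P Q},
    ENNReal.ofReal (𝒟.len Q.1) ^ (d : ℝ)

/-- The sphere of radius `s` centered at `z` inside the affine subspace `W`. -/
def sphereIn (n : ℕ) (W : AffineSubspace ℝ (Euc n)) (z : Euc n) (s : ℝ) : Set (Euc n) :=
  Metric.sphere z s ∩ (W : Set (Euc n))

/-- The pair `(x,r)` is `ε`-GWEC-bad for `F`: there is an `(n-d-1)`-dimensional sphere
`S ⊆ B(x,r)` with `dist(S,F) > εr`, contractible to a point inside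
`{y ∈ B(x,r) : dist(y,F) > εr}`, whose convex hull meets `F`. -/
def GWECBad (n d : ℕ) (ε : ℝ) (F : Set (Euc n)) (x : Euc n) (r : ℝ) : Prop :=
  ∃ (W : AffineSubspace ℝ (Euc n)) (z : Euc n) (s : ℝ),
    z ∈ W ∧ 0 < s ∧ Module.finrank ℝ W.direction = n - d ∧
    sphereIn n W z s ⊆ ball x r ∧
    (ENNReal.ofReal (ε * r) < ⨅ y ∈ sphereIn n W z s, EMetric.infEdist y F) ∧
    (∃ H : Euc n × ℝ → Euc n,
      ContinuousOn H (sphereIn n W z s ×ˢ Set.Icc (0 : ℝ) 1) ∧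
      (∀ q ∈ sphereIn n W z s ×ˢ Set.Icc (0 : ℝ) 1,
        H q ∈ ball x r ∧ ε * r < Metric.infDist (H q) F) ∧
      (∀ y ∈ sphereIn n W z s, H (y, 0) = y) ∧
      (∃ y₀ : Euc n, ∀ y ∈ sphereIn n W z s, H (y, 1) = y₀)) ∧
    (convexHull ℝ (sphereIn n W z s) ∩ F).Nonempty

/-- `F` is Ahlfors `d`-regular with constant `A ≥ 1`. -/
def AhlforsRegular (n : ℕ) (d A : ℝ) (F : Set (Euc n)) : Prop :=
  1 ≤ A ∧ ∀ x ∈ F, ∀ r : ℝ, 0 < r → ENNReal.ofReal r < EMetric.diam F →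
    ENNReal.ofReal (r ^ d / A) ≤ μH[d] (F ∩ ball x r) ∧
      μH[d] (F ∩ ball x r) ≤ ENNReal.ofReal (A * r ^ d)

/-- `F` is uniformly rectifiable: Ahlfors `d`-regular with big pieces of Lipschitz images. -/
def UnifRect (n d : ℕ) (F : Set (Euc n)) : Prop :=
  (∃ A : ℝ, AhlforsRegular n d A F) ∧
    ∃ (L : ℝ≥0) (θ : ℝ), 0 < L ∧ 0 < θ ∧
      ∀ x ∈ F, ∀ r : ℝ, 0 < r → ENNReal.ofReal r < EMetric.diam F →
        ∃ f : EuclideanSpace ℝ (Fin d) → Euc n, LipschitzWith L f ∧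
          ENNReal.ofReal (θ * r ^ (d : ℝ)) ≤ μH[(d : ℝ)] (f '' Set.univ ∩ ball x r)

/-- The measure `1_ℬ(x,r) (dr/r) dℋ^d|_F(x)` is a Carleson measure on `F × (0,∞)`. -/
def CarlesonBad (n : ℕ) (d : ℝ) (F : Set (Euc n)) (ℬ : Set (Euc n × ℝ)) : Prop :=
  ∃ M : ℝ, 0 ≤ M ∧ ∀ x ∈ F, ∀ r : ℝ, 0 < r → ENNReal.ofReal r ≤ EMetric.diam F →
    (∫⁻ y in ball x r ∩ F,
        ∫⁻ s in Set.Ioo (0 : ℝ) r,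
          Set.indicator ℬ (fun q => (ENNReal.ofReal q.2)⁻¹) (y, s) ∂μH[d])
      ≤ ENNReal.ofReal (M * r ^ d)

/-- `Q ⊆ R` for scaled cubes: `Q` is contained in `R` and has smaller or equal scale. -/
def cubeLE {n : ℕ} (Q R : ℤ × Set (Euc n)) : Prop := R.1 ≤ Q.1 ∧ Q.2 ⊆ R.2

/-- `Q'` is a child of `Q`. -/
def CDS.child {n : ℕ} {E : Set (Euc n)} (𝒟 : CDS n E) (Q Q' : ℤ × Set (Euc n)) : Prop :=
  Q' ∈ 𝒟.cubes ∧ Q'.1 = Q.1 + 1 ∧ Q'.2 ⊆ Q.2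

/-- `𝒯` is a stopping-time region with maximal cube `top`. -/
def CDS.IsStoppingTime {n : ℕ} {E : Set (Euc n)} (𝒟 : CDS n E)
    (𝒯 : Set (ℤ × Set (Euc n))) (top : ℤ × Set (Euc n)) : Prop :=
  𝒯 ⊆ 𝒟.cubes ∧ top ∈ 𝒯 ∧ (∀ Q ∈ 𝒯, cubeLE Q top) ∧
    (∀ Q ∈ 𝒯, ∀ R ∈ 𝒟.cubes, cubeLE Q R → cubeLE R top → R ∈ 𝒯) ∧
    (∀ Q ∈ 𝒯, (∃ Q', 𝒟.child Q Q' ∧ Q' ∉ 𝒯) → ∀ Q', 𝒟.child Q Q' → Q' ∉ 𝒯)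

/-- The minimal cubes of a collection `𝒯` of cubes. -/
def minCubes {n : ℕ} (𝒯 : Set (ℤ × Set (Euc n))) : Set (ℤ × Set (Euc n)) :=
  {Q ∈ 𝒯 | ∀ Q' ∈ 𝒯, cubeLE Q' Q → Q' = Q}

/-- `d_ℱ(x) = inf_{S ∈ ℱ} (ℓ(S) + dist(x,S))` for a family `ℱ` of Christ–David cubes. -/
def CDS.dFam {n : ℕ} {E : Set (Euc n)} (𝒟 : CDS n E)
    (ℱ : Set (ℤ × Set (Euc n))) (x : Euc n) : ℝ :=
  ⨅ S : ℱ, (𝒟.len S.1 + Metric.infDist x S.1.2)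

/-- The (half-open) dyadic cube of ℝⁿ of sidelength `2^{-m}` indexed by `k`. -/
def dyC (n : ℕ) (m : ℤ) (k : Fin n → ℤ) : Set (Euc n) :=
  {x | ∀ i, (k i : ℝ) * (2 : ℝ) ^ (-m) ≤ x i ∧ x i < ((k i : ℝ) + 1) * (2 : ℝ) ^ (-m)}

/-- The `d`-dimensional skeleton of the (closed) dyadic cube indexed by `(m,k)`:
the union of its `d`-dimensional faces. -/
def skel (n d : ℕ) (m : ℤ) (k : Fin n → ℤ) : Set (Euc n) :=
  ⋃ (F : Finset (Fin n)) (_ : F.card = d) (ε : Fin n → Fin 2),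
    {x | (∀ i ∈ F, (k i : ℝ) * (2 : ℝ) ^ (-m) ≤ x i ∧
            x i ≤ ((k i : ℝ) + 1) * (2 : ℝ) ^ (-m)) ∧
      ∀ i ∉ F, x i = ((k i : ℝ) + ((ε i : ℕ) : ℝ)) * (2 : ℝ) ^ (-m)}

/-- The concentric dilate `η⁻¹ I` of the dyadic cube indexed by `(m,k)`. -/
def dilC (n : ℕ) (η : ℝ) (m : ℤ) (k : Fin n → ℤ) : Set (Euc n) :=
  {x | ∀ i, |x i - ((k i : ℝ) + 1 / 2) * (2 : ℝ) ^ (-m)| ≤ η⁻¹ * (2 : ℝ) ^ (-m) / 2}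

/-- The dyadic cube `I` is maximal with property `P`: it has `P`, and no dyadic
cube properly containing it has `P`. -/
def MaxWith (n : ℕ) (P : ℤ × (Fin n → ℤ) → Prop) (I : ℤ × (Fin n → ℤ)) : Prop :=
  P I ∧ ∀ J : ℤ × (Fin n → ℤ), dyC n I.1 I.2 ⊆ dyC n J.1 J.2 →
    dyC n J.1 J.2 ≠ dyC n I.1 I.2 → ¬ P J

/-- `d_ℱ(x) = inf_{S ∈ ℱ} (ℓ(S) + dist(x,S))` for a finite family of sets with
assigned sizes. -/
def dGen (n : ℕ) (ℱ : Finset (Set (Euc n))) (Lf : Set (Euc n) → ℝ) (x : Euc n) : ℝ :=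
  ⨅ S : ℱ, (Lf S.1 + Metric.infDist x S.1)

/-- `d_ℱ(I) = inf_{x ∈ I} d_ℱ(x)` over a dyadic cube `I`. -/
def dGenI (n : ℕ) (ℱ : Finset (Set (Euc n))) (Lf : Set (Euc n) → ℝ)
    (I : ℤ × (Fin n → ℤ)) : ℝ :=
  ⨅ x : dyC n I.1 I.2, dGen n ℱ Lf x.1

/-- The unit cube `[0,1]ⁿ`. -/
def unitCube (n : ℕ) : Set (Euc n) := {x | ∀ i, x i ∈ Set.Icc (0 : ℝ) 1}


section aux
variable {n : ℕ} {ℱ : Finset (Set (Euc n))} {Lf : Set (Euc n) → ℝ}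

lemma dGen_nonneg (hne : ℱ.Nonempty) (hLf : ∀ S ∈ ℱ, 0 < Lf S) (x : Euc n) :
    0 ≤ dGen n ℱ Lf x := by
  haveI : Nonempty ↥ℱ := ⟨⟨hne.choose, hne.choose_spec⟩⟩
  apply le_ciInf
  intro S
  show (0:ℝ) ≤ Lf S.1 + Metric.infDist x S.1
  have h1 := hLf S.1 S.2
  have h2 : (0:ℝ) ≤ Metric.infDist x S.1 := Metric.infDist_nonneg
  linarith

lemma dGen_bdd (hne : ℱ.Nonempty) (hLf : ∀ S ∈ ℱ, 0 < Lf S) (x : Euc n) :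
    BddBelow (Set.range fun S : ℱ => Lf S.1 + Metric.infDist x S.1) := by
  refine ⟨0, ?_⟩
  rintro _ ⟨S, rfl⟩
  show (0:ℝ) ≤ Lf S.1 + Metric.infDist x S.1
  have h1 := hLf S.1 S.2
  have h2 : (0:ℝ) ≤ Metric.infDist x S.1 := Metric.infDist_nonneg
  linarith

lemma dGen_lip (hne : ℱ.Nonempty) (hLf : ∀ S ∈ ℱ, 0 < Lf S) (x y : Euc n) :
    dGen n ℱ Lf x ≤ dGen n ℱ Lf y + dist x y := by
  haveI : Nonempty ↥ℱ := ⟨⟨hne.choose, hne.choose_spec⟩⟩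
  have h : dGen n ℱ Lf x - dist x y ≤ dGen n ℱ Lf y := by
    apply le_ciInf
    intro S
    show dGen n ℱ Lf x - dist x y ≤ Lf S.1 + Metric.infDist y S.1
    have h1 : dGen n ℱ Lf x ≤ Lf S.1 + Metric.infDist x S.1 := by
      rw [dGen]
      exact ciInf_le (f := fun S : ℱ => Lf S.1 + Metric.infDist x S.1)
        (dGen_bdd hne hLf x) S
    have h2 : Metric.infDist x S.1 ≤ Metric.infDist y S.1 + dist x y :=
      Metric.infDist_le_infDist_add_dist
    linarith
  linarith

end aux

theorem stmt6 (n : ℕ) (hn : 1 ≤ n) (ℱ : Finset (Set (Euc n))) (hne : ℱ.Nonempty)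
    (hSne : ∀ S ∈ ℱ, S.Nonempty) (Lf : Set (Euc n) → ℝ) (hLf : ∀ S ∈ ℱ, 0 < Lf S)
    (τ : ℝ) (hτ0 : 0 < τ) (hτ : τ < 1 / (2 * Real.sqrt n)) :
    ∀ I : ℤ × (Fin n → ℤ),
      MaxWith n (fun J => (2 : ℝ) ^ (-J.1) < τ * dGenI n ℱ Lf J) I →
      τ * dGenI n ℱ Lf I / (2 * (1 + Real.sqrt n)) ≤ (2 : ℝ) ^ (-I.1) ∧
        (2 : ℝ) ^ (-I.1) < τ * dGenI n ℱ Lf I := by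
  rintro ⟨m, k⟩ ⟨hP, hmax⟩
  simp only at hP hmax ⊢
  refine ⟨?_, hP⟩
  set L : ℝ := (2:ℝ)^(-m) with hLdef
  have hL : 0 < L := by positivity
  have hL2 : (2:ℝ)^(-(m-1)) = 2 * L := by
    have e : -(m-1) = 1 + -m := by ring
    rw [hLdef, e, zpow_add₀ (by norm_num : (2:ℝ) ≠ 0), zpow_one]
  -- the parent cube
  set J : ℤ × (Fin n → ℤ) := (m - 1, fun i => k i / 2) with hJdef
  have hsub : dyC n m k ⊆ dyC n J.1 J.2 := by
    intro x hx i
    obtain ⟨h1, h2⟩ := hx i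
    rw [← hLdef] at h1 h2
    have hki : 2 * (k i / 2) ≤ k i ∧ k i < 2 * (k i / 2) + 2 := by omega
    have c1 : ((2 * (k i / 2) : ℤ) : ℝ) ≤ (k i : ℝ) := by exact_mod_cast hki.1
    have c2 : (k i : ℝ) + 1 ≤ ((2 * (k i / 2) : ℤ) : ℝ) + 2 := by
      have : k i + 1 ≤ 2 * (k i / 2) + 2 := by omega
      exact_mod_cast this
    push_cast at c1 c2
    simp only [hJdef, hL2]
    constructor
    · nlinarith [mul_le_mul_of_nonneg_right c1 hL.le]
    · nlinarith [mul_le_mul_of_nonneg_right c2 hL.le]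
  -- the parent is a strictly larger cube
  have i0 : Fin n := ⟨0, hn⟩
  set c : ℤ := k i0 with hcdef
  set b : Fin n → ℤ := fun i => if i = i0 then 2 * (c / 2) + 1 - c % 2 else 2 * (k i / 2)
    with hbdef
  set y : Euc n := WithLp.toLp 2 (fun i => (b i : ℝ) * L) with hydef
  have hyJ : y ∈ dyC n J.1 J.2 := by
    intro i
    have hbi : 2 * (k i / 2) ≤ b i ∧ b i < 2 * (k i / 2) + 2 := by
      by_cases h : i = i0
      · subst h; simp only [hbdef, if_pos rfl, ← hcdef]; omega
      · simp only [hbdef, if_neg h]; omega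
    have c1 : ((2 * (k i / 2) : ℤ) : ℝ) ≤ (b i : ℝ) := by exact_mod_cast hbi.1
    have c2 : (b i : ℝ) + 1 ≤ ((2 * (k i / 2) : ℤ) : ℝ) + 2 := by
      have : b i + 1 ≤ 2 * (k i / 2) + 2 := by omega
      exact_mod_cast this
    push_cast at c1 c2
    simp only [hJdef, hL2, hydef, PiLp.toLp_apply]
    constructor
    · nlinarith [mul_le_mul_of_nonneg_right c1 hL.le]
    · nlinarith [mul_le_mul_of_nonneg_right c2 hL.le]
  have hyI : y ∉ dyC n m k := by
    intro hy
    obtain ⟨h1, h2⟩ := hy i0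
    have hb0 : b i0 = 2 * (c / 2) + 1 - c % 2 := by simp [hbdef]
    have hbc : b i0 ≠ c := by omega
    have : (c : ℝ) * L ≤ (b i0 : ℝ) * L := by simpa [hydef, hLdef] using h1
    have : (b i0 : ℝ) * L < ((c : ℝ) + 1) * L := by simpa [hydef, hLdef, hcdef] using h2
    have e1 : c ≤ b i0 := by
      by_contra hcon
      push_neg at hcon
      have : (b i0 : ℝ) < (c : ℝ) := by exact_mod_cast hcon
      nlinarith
    have e2 : b i0 < c + 1 := by
      by_contra hcon
      push_neg at hcon
      have : ((c : ℝ) + 1) ≤ (b i0 : ℝ) := by exact_mod_cast hcon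
      nlinarith
    omega
  have hneq : dyC n J.1 J.2 ≠ dyC n m k := fun h => hyI (h ▸ hyJ)
  -- maximality applied to the parent
  have hJbound : τ * dGenI n ℱ Lf J ≤ 2 * L := by
    have := hmax J hsub hneq
    rw [not_lt] at this
    calc τ * dGenI n ℱ Lf J ≤ (2:ℝ)^(-J.1) := this
    _ = 2 * L := by rw [hJdef]; exact hL2
  -- corner point of I
  set x₀ : Euc n := WithLp.toLp 2 (fun i => (k i : ℝ) * L) with hx₀def
  have hx₀ : x₀ ∈ dyC n m k := by
    intro i
    simp only [hx₀def, hLdef, PiLp.toLp_apply]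
    exact ⟨le_refl _, by nlinarith⟩
  have hx₀J : x₀ ∈ dyC n J.1 J.2 := hsub hx₀
  -- diameter of the parent
  have hdist : ∀ z w : Euc n, z ∈ dyC n J.1 J.2 → w ∈ dyC n J.1 J.2 →
      dist z w ≤ Real.sqrt n * (2 * L) := by
    intro z w hz hw
    rw [EuclideanSpace.dist_eq]
    have hsum : ∑ i, dist (z i) (w i) ^ 2 ≤ (n : ℝ) * (2 * L) ^ 2 := by
      calc ∑ i, dist (z i) (w i) ^ 2 ≤ ∑ _i : Fin n, (2 * L) ^ 2 := by
            apply Finset.sum_le_sum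
            intro i _
            obtain ⟨h1, h2⟩ := hz i
            obtain ⟨h3, h4⟩ := hw i
            rw [hL2] at h1 h2 h3 h4
            have e : ((((k i / 2 : ℤ)) : ℝ) + 1) * (2 * L) =
                ((k i / 2 : ℤ) : ℝ) * (2 * L) + 2 * L := by ring
            rw [e] at h2 h4
            have habs : |z i - w i| ≤ 2 * L := by
              rw [abs_le]; constructor <;> linarith
            rw [Real.dist_eq]
            nlinarith [abs_nonneg (z i - w i)]
        _ = (n : ℝ) * (2 * L) ^ 2 := by
            rw [Finset.sum_const, Finset.card_univ, Fintype.card_fin, nsmul_eq_mul]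
    calc Real.sqrt (∑ i, dist (z i) (w i) ^ 2) ≤ Real.sqrt ((n : ℝ) * (2 * L) ^ 2) :=
          Real.sqrt_le_sqrt hsum
      _ = Real.sqrt n * (2 * L) := by
          rw [Real.sqrt_mul (by positivity), Real.sqrt_sq (by positivity)]
  -- bridging the infima
  haveI hJne : Nonempty ↥(dyC n J.1 J.2) := ⟨⟨x₀, hx₀J⟩⟩
  have key : dGenI n ℱ Lf (m, k) ≤ dGenI n ℱ Lf J + Real.sqrt n * (2 * L) := by
    have h1 : dGenI n ℱ Lf (m, k) ≤ dGen n ℱ Lf x₀ := by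
      apply ciInf_le _ (⟨x₀, hx₀⟩ : ↥(dyC n (m, k).1 (m, k).2))
      refine ⟨0, ?_⟩
      rintro _ ⟨z, rfl⟩
      exact dGen_nonneg hne hLf z.1
    have h2 : dGen n ℱ Lf x₀ - Real.sqrt n * (2 * L) ≤ dGenI n ℱ Lf J := by
      apply le_ciInf
      intro z
      show dGen n ℱ Lf x₀ - Real.sqrt n * (2 * L) ≤ dGen n ℱ Lf z.1
      have h3 := dGen_lip hne hLf x₀ z.1
      have h4 := hdist x₀ z.1 hx₀J z.2
      linarith
    linarith
  -- final arithmetic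
  have hsq1 : 1 ≤ Real.sqrt n := by
    rw [show (1:ℝ) = Real.sqrt 1 by simp]
    exact Real.sqrt_le_sqrt (by exact_mod_cast hn)
  have hτ1 : τ ≤ 1 := by
    have hpos : (0:ℝ) < 2 * Real.sqrt n := by linarith
    have hτs : τ * (2 * Real.sqrt n) < 1 := by
      rw [← lt_div_iff₀ hpos]; exact hτ
    nlinarith
  have h5 : τ * dGenI n ℱ Lf (m, k) ≤ τ * dGenI n ℱ Lf J + τ * (Real.sqrt n * (2 * L)) := by
    have := mul_le_mul_of_nonneg_left key hτ0.le
    linarith [mul_add τ (dGenI n ℱ Lf J) (Real.sqrt n * (2 * L)), this]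
  have h6 : τ * (Real.sqrt n * (2 * L)) ≤ Real.sqrt n * (2 * L) :=
    mul_le_of_le_one_left (by positivity) hτ1
  rw [div_le_iff₀ (by positivity)]
  nlinarith [h5, h6, hJbound]

end QCMGP
end
end

section
/- Let 1 ≤ d < n be integers, C₀ ≥ 1, C₁ ≥ 1, C₂ > 2C₀. There is ε* > 0 depending on C₀, C₁, C₂ such that for all 0 < ε₁ ≤ ε₀ ≤ ε* the following holds. Let E₁, E₂ ⊆ ℝⁿ, and let B = B(x_B, r_B) be a ball centered on E₁ such that d_{C₀B}(E₁, U) < ε₀ for some set U ⊆ ℝⁿ that is a union of d-planes, and such that d_{C₂B}(E₁, E₂) < ε₁. Then for every ball B' = B(x_{B'}, r_{B'}) centered on E₂ with C₂B' ⊆ B and r_{B'} ≥ r_B/C₁, one has d_{C₀B'}(E₂, U) < 2C₁C₂ ε₀. In particular, the bilateral approximation by unions of planes (BAUP) property with parameters (ε₀, C₀) is (ε₁, C₁, C₂)-continuous. -/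
open MeasureTheory Metric Set
open scoped ENNReal NNReal

noncomputable section

namespace QCMGP

lemma bdd_aux (n : ℕ) (x : Euc n) (R : ℝ) (A B : Set (Euc n)) :
    BddAbove (Set.range fun y : ↥(A ∩ ball x R) => Metric.infDist y.1 B) := by
  refine ⟨Metric.infDist x B + R, ?_⟩
  rintro _ ⟨⟨y, _, hy⟩, rfl⟩
  have h1 : Metric.infDist y B ≤ Metric.infDist x B + dist y x :=
    Metric.infDist_le_infDist_add_dist
  have h2 : dist y x ≤ R := le_of_lt (mem_ball.mp hy)
  simpa using h1.trans (by linarith)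

lemma ndist_lt (n : ℕ) (x : Euc n) (R : ℝ) (A B : Set (Euc n)) (ε : ℝ)
    (hR : 0 < R) (h : ndist n x R A B < ε) :
    (∀ z ∈ A ∩ ball x R, Metric.infDist z B < ε * R) ∧
      (∀ z ∈ B ∩ ball x R, Metric.infDist z A < ε * R) := by
  unfold ndist at h
  rw [inv_mul_lt_iff₀ hR] at h
  constructor
  · intro z hz
    have h1 : Metric.infDist z B ≤
        ⨆ y : ↥(A ∩ ball x R), Metric.infDist y.1 B :=
      le_ciSup (bdd_aux n x R A B) ⟨z, hz⟩
    have h2 := lt_of_le_of_lt (h1.trans (le_max_left _ _)) h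
    linarith [mul_comm R ε]
  · intro z hz
    have h1 : Metric.infDist z A ≤
        ⨆ y : ↥(B ∩ ball x R), Metric.infDist y.1 A :=
      le_ciSup (bdd_aux n x R B A) ⟨z, hz⟩
    have h2 := lt_of_le_of_lt (h1.trans (le_max_right _ _)) h
    linarith [mul_comm R ε]

lemma dist_add_le_of_ball_subset {n : ℕ} (hn : 0 < n) {a b : Euc n} {s t : ℝ}
    (hs : 0 < s) (h : ball a s ⊆ ball b t) : dist a b + s ≤ t := by
  have key : ∀ c : ℝ, 0 ≤ c → c < s → dist a b + c < t := by
    intro c hc0 hcs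
    rcases eq_or_ne a b with rfl | hab
    · -- pick any unit vector
      set v : Euc n := WithLp.toLp 2 (fun _ => (1 : ℝ)) with hv
      have hv0 : v ≠ 0 := by
        intro hv0
        have := congrArg (fun w : Euc n => w ⟨0, hn⟩) hv0
        norm_num [hv] at this
      set u : Euc n := ‖v‖⁻¹ • v with hu
      have hu1 : ‖u‖ = 1 := norm_smul_inv_norm (𝕜 := ℝ) hv0
      have hmem : a + c • u ∈ ball a s := by
        rw [mem_ball, dist_eq_norm]
        simp only [add_sub_cancel_left, norm_smul, hu1, Real.norm_eq_abs,
          abs_of_nonneg hc0]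
        simpa using hcs
      have := h hmem
      rw [mem_ball, dist_eq_norm, add_sub_cancel_left, norm_smul, hu1,
        Real.norm_eq_abs, abs_of_nonneg hc0] at this
      simpa using by linarith
    · set w : Euc n := a - b with hw
      have hw0 : w ≠ 0 := sub_ne_zero.mpr hab
      have hwn : (0:ℝ) < ‖w‖ := norm_pos_iff.mpr hw0
      set u : Euc n := ‖w‖⁻¹ • w with hu
      have hu1 : ‖u‖ = 1 := norm_smul_inv_norm (𝕜 := ℝ) hw0
      have hmem : a + c • u ∈ ball a s := by
        rw [mem_ball, dist_eq_norm]
        simp only [add_sub_cancel_left, norm_smul, hu1, Real.norm_eq_abs,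
          abs_of_nonneg hc0]
        simpa using hcs
      have hb := h hmem
      rw [mem_ball, dist_eq_norm] at hb
      have heq : a + c • u - b = (1 + c * ‖w‖⁻¹) • w := by
        rw [hu, smul_smul, add_smul, one_smul, hw]
        abel
      rw [heq, norm_smul, Real.norm_eq_abs] at hb
      have hpos : (0:ℝ) ≤ 1 + c * ‖w‖⁻¹ := by positivity
      rw [abs_of_nonneg hpos] at hb
      have hexp : (1 + c * ‖w‖⁻¹) * ‖w‖ = ‖w‖ + c := by
        field_simp
      rw [hexp] at hb
      rw [dist_eq_norm, ← hw]
      linarith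
  by_contra hlt
  push_neg at hlt
  rcases le_or_gt (t - dist a b) 0 with h0 | h0
  · have := key 0 le_rfl hs
    linarith
  · have := key (t - dist a b) (le_of_lt h0) (by linarith)
    linarith

set_option maxHeartbeats 1000000 in
theorem stmt8 (n d : ℕ) (hd1 : 1 ≤ d) (hdn : d < n) (C₀ C₁ C₂ : ℝ)
    (hC₀ : 1 ≤ C₀) (hC₁ : 1 ≤ C₁) (hC₂ : 2 * C₀ < C₂) :
    ∃ εs : ℝ, 0 < εs ∧ ∀ ε₀ ε₁ : ℝ, 0 < ε₁ → ε₁ ≤ ε₀ → ε₀ ≤ εs →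
      ∀ (E₁ E₂ U : Set (Euc n)) (x : Euc n) (r : ℝ), 0 < r → x ∈ E₁ →
        IsUnionOfPlanes n d U →
        ndist n x (C₀ * r) E₁ U < ε₀ →
        ndist n x (C₂ * r) E₁ E₂ < ε₁ →
        ∀ (x' : Euc n) (r' : ℝ), x' ∈ E₂ → 0 < r' →
          ball x' (C₂ * r') ⊆ ball x r → r / C₁ ≤ r' →
          ndist n x' (C₀ * r') E₂ U < 2 * C₁ * C₂ * ε₀ := by
  have hC₀pos : (0:ℝ) < C₀ := by linarith
  have hC₁pos : (0:ℝ) < C₁ := by linarith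
  have hC₂pos : (0:ℝ) < C₂ := by linarith
  have hC₂2 : (2:ℝ) ≤ C₂ := by linarith
  have hC₂C₁ : (0:ℝ) < C₂ * C₁ := mul_pos hC₂pos hC₁pos
  refine ⟨min ((C₂ - C₀) / (C₂ * C₁)) (1 / (2 * C₀)), ?_, ?_⟩
  · exact lt_min (div_pos (by linarith) hC₂C₁) (by positivity)
  · intro ε₀ ε₁ hε₁ h₁₀ h₀s E₁ E₂ U x r hr hxE₁ _hU h1 h2 x' r' hx'E₂ hr' hball hrr'
    have hε₀ : 0 < ε₀ := lt_of_lt_of_le hε₁ h₁₀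
    have hεa : ε₀ ≤ (C₂ - C₀) / (C₂ * C₁) := h₀s.trans (min_le_left _ _)
    have hεb : ε₀ ≤ 1 / (2 * C₀) := h₀s.trans (min_le_right _ _)
    have hεa' : ε₀ * (C₂ * C₁) ≤ C₂ - C₀ := (le_div_iff₀ hC₂C₁).mp hεa
    have hεb' : ε₀ * (2 * C₀) ≤ 1 := (le_div_iff₀ (by linarith)).mp hεb
    have hrr : r ≤ C₁ * r' := by
      rw [div_le_iff₀ hC₁pos] at hrr'
      linarith [mul_comm r' C₁]
    have hxx' : dist x' x + C₂ * r' ≤ r :=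
      dist_add_le_of_ball_subset (by omega) (by positivity) hball
    obtain ⟨h1a, h1b⟩ := ndist_lt n x (C₀ * r) E₁ U ε₀ (by positivity) h1
    obtain ⟨h2a, h2b⟩ := ndist_lt n x (C₂ * r) E₁ E₂ ε₁ (by positivity) h2
    set M : ℝ := ε₁ * (C₂ * r) + ε₀ * (C₀ * r) with hM
    have hM0 : 0 ≤ M := by
      have := mul_pos hε₁ (mul_pos hC₂pos hr)
      have := mul_pos hε₀ (mul_pos hC₀pos hr)
      linarith
    have hyxgen : ∀ y : Euc n, y ∈ ball x' (C₀ * r') →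
        dist y x < r - (C₂ - C₀) * r' := by
      intro y hy
      have h3 := mem_ball.mp hy
      have h4 := dist_triangle y x' x
      nlinarith
    have hA : ε₁ * (C₂ * r) ≤ ε₀ * (C₂ * (C₁ * r')) := by
      apply mul_le_mul h₁₀ (mul_le_mul_of_nonneg_left hrr hC₂pos.le)
        (mul_nonneg hC₂pos.le hr.le) hε₀.le
    have hB : ε₀ * (C₀ * r) ≤ ε₀ * (C₀ * (C₁ * r')) :=
      mul_le_mul_of_nonneg_left (mul_le_mul_of_nonneg_left hrr hC₀pos.le) hε₀.le
    have hstep : ε₁ * (C₂ * r) ≤ (C₂ - C₀) * r' := by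
      calc ε₁ * (C₂ * r) ≤ ε₀ * (C₂ * (C₁ * r')) := hA
        _ = ε₀ * (C₂ * C₁) * r' := by ring
        _ ≤ (C₂ - C₀) * r' := mul_le_mul_of_nonneg_right hεa' hr'.le
    have key₁ : ∀ y ∈ E₂ ∩ ball x' (C₀ * r'), Metric.infDist y U < M := by
      rintro y ⟨hyE, hy⟩
      have hyx := hyxgen y hy
      have hyx2 : y ∈ ball x (C₂ * r) := by
        rw [mem_ball]
        nlinarith [mul_pos (show (0:ℝ) < C₂ - C₀ by linarith) hr']
      have hinf := h2b y ⟨hyE, hyx2⟩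
      obtain ⟨z, hzE, hz⟩ := (Metric.infDist_lt_iff ⟨x, hxE₁⟩).mp hinf
      have hzx : z ∈ ball x (C₀ * r) := by
        rw [mem_ball]
        have h5 := dist_triangle z y x
        have h6 : dist z y = dist y z := dist_comm z y
        nlinarith
      have hzU := h1a z ⟨hzE, hzx⟩
      have h7 : Metric.infDist y U ≤ Metric.infDist z U + dist y z :=
        Metric.infDist_le_infDist_add_dist
      rw [hM]
      linarith
    have key₂ : ∀ y ∈ U ∩ ball x' (C₀ * r'), Metric.infDist y E₂ < M := by
      rintro y ⟨hyU, hy⟩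
      have hyx := hyxgen y hy
      have hyx1 : y ∈ ball x (C₀ * r) := by
        rw [mem_ball]
        nlinarith [mul_pos (show (0:ℝ) < C₂ - C₀ by linarith) hr']
      have hinf := h1b y ⟨hyU, hyx1⟩
      obtain ⟨z, hzE, hz⟩ := (Metric.infDist_lt_iff ⟨x, hxE₁⟩).mp hinf
      have hzx : z ∈ ball x (C₂ * r) := by
        rw [mem_ball]
        have h5 := dist_triangle z y x
        have h6 : dist z y = dist y z := dist_comm z y
        nlinarith [mul_nonneg (show (0:ℝ) ≤ 1 - ε₀ * (2 * C₀) by linarith) hr.le,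
          mul_pos (show (0:ℝ) < C₂ - C₀ by linarith) hr']
      have hzE₂ := h2a z ⟨hzE, hzx⟩
      have h7 : Metric.infDist y E₂ ≤ Metric.infDist z E₂ + dist y z :=
        Metric.infDist_le_infDist_add_dist
      rw [hM]
      linarith
    have hgap : C₂ + C₀ < 2 * C₂ * C₀ := by nlinarith
    have hMlt : M < C₀ * r' * (2 * C₁ * C₂ * ε₀) := by
      have hpos : (0:ℝ) < ε₀ * C₁ * r' := by positivity
      nlinarith [mul_pos hpos (show (0:ℝ) < 2 * C₂ * C₀ - C₂ - C₀ by linarith)]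
    unfold ndist
    rw [inv_mul_lt_iff₀ (by positivity)]
    refine lt_of_le_of_lt (max_le ?_ ?_) hMlt
    · exact Real.iSup_le (fun y => (key₁ y.1 y.2).le) hM0
    · exact Real.iSup_le (fun y => (key₂ y.1 y.2).le) hM0

end QCMGP
end
end

section
/- Let 0 < d ≤ n, c > 0, m ∈ ℤ, and let E ⊆ ℝⁿ be a set satisfying ℋ^d_∞(E ∩ B(x,r)) ≥ c r^d for all x ∈ E and all 0 < r ≤ 2^{−m}. Then Σ_J ℓ(J)^d ≤ C(n,d,c)·ℋ^d(E), where the sum is taken over all dyadic cubes J of ℝⁿ of sidelength ℓ(J) = 2^{−m} with J ∩ E ≠ ∅. -/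
open MeasureTheory Metric Set
open scoped ENNReal NNReal

noncomputable section

namespace QCMGP

lemma abs_coord_le_dist {n : ℕ} (x y : Euc n) (i : Fin n) : |x i - y i| ≤ dist x y := by
  rw [EuclideanSpace.dist_eq, ← Real.sqrt_sq_eq_abs]
  apply Real.sqrt_le_sqrt
  have h : dist (x i) (y i) ^ 2 = (x i - y i) ^ 2 := by rw [Real.dist_eq, sq_abs]
  rw [← h]
  exact Finset.single_le_sum (f := fun j => dist (x j) (y j) ^ 2) (fun j _ => sq_nonneg _) (Finset.mem_univ i)

lemma hcontent_le_hausdorff {n : ℕ} {d : ℝ} (hd : 0 < d) (A : Set (Euc n)) :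
    hcontent n d A ≤ μH[d] A := by
  rw [MeasureTheory.Measure.hausdorffMeasure_apply]
  refine le_iSup₂_of_le 1 one_pos ?_
  refine le_iInf fun U => le_iInf fun hU => le_iInf fun _ => ?_
  refine le_trans (iInf₂_le U hU) (le_of_eq (tsum_congr fun i => ?_))
  rcases (U i).eq_empty_or_nonempty with h | h
  · simp [h, ENNReal.zero_rpow_of_pos hd, show EMetric.diam (∅ : Set (Euc n)) = 0 from Metric.ediam_empty]
  · rw [iSup_pos h]; rfl

theorem stmt12 (n : ℕ) (d c : ℝ) (hd : 0 < d) (hdn : d ≤ n) (hc : 0 < c) :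
    ∃ C : ℝ, 0 < C ∧
      ∀ (m : ℤ) (E : Set (Euc n)),
        (∀ x ∈ E, ∀ r : ℝ, 0 < r → r ≤ (2 : ℝ) ^ (-m) →
          ENNReal.ofReal c * ENNReal.ofReal r ^ d ≤ hcontent n d (E ∩ ball x r)) →
        (∑' k : {k : Fin n → ℤ // (dyC n m k ∩ E).Nonempty},
            ENNReal.ofReal ((2 : ℝ) ^ (-m)) ^ d)
          ≤ ENNReal.ofReal C * μH[d] E := by
  refine ⟨3 ^ n / c, by positivity, ?_⟩
  intro m E hE
  set t : ℝ := (2 : ℝ) ^ (-m) with ht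
  have htpos : 0 < t := by positivity
  let pt : {k : Fin n → ℤ // (dyC n m k ∩ E).Nonempty} → Euc n := fun k => k.2.choose
  have hpt : ∀ k, pt k ∈ dyC n m k.1 ∧ pt k ∈ E := fun k => k.2.choose_spec
  have key : ∀ k, ENNReal.ofReal c * ENNReal.ofReal t ^ d ≤ μH[d] (E ∩ ball (pt k) t) :=
    fun k => (hE (pt k) (hpt k).2 t htpos le_rfl).trans (hcontent_le_hausdorff hd _)
  let φ : {k : Fin n → ℤ // (dyC n m k ∩ E).Nonempty} → (Fin n → ZMod 3) :=
    fun k i => ((k.1 i : ℤ) : ZMod 3)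
  have hdisj : ∀ k k', k ≠ k' → φ k = φ k' →
      Disjoint (ball (pt k) t) (ball (pt k') t) := by
    intro k k' hne hφ
    have hkk : k.1 ≠ k'.1 := fun h => hne (Subtype.ext h)
    obtain ⟨i, hi⟩ := Function.ne_iff.mp hkk
    have hdvd : (3 : ℤ) ∣ k.1 i - k'.1 i := by
      have h1 : ((k.1 i : ℤ) : ZMod 3) = ((k'.1 i : ℤ) : ZMod 3) := congrFun hφ i
      have h2 : ((k.1 i - k'.1 i : ℤ) : ZMod 3) = 0 := by push_cast [h1]; ring
      exact (ZMod.intCast_zmod_eq_zero_iff_dvd _ 3).mp h2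
    have h3 : (3 : ℤ) ≤ |k.1 i - k'.1 i| :=
      Int.le_of_dvd (abs_pos.mpr (sub_ne_zero.mpr hi)) ((dvd_abs _ _).mpr hdvd)
    have hZ : (3 : ℝ) ≤ |(k.1 i : ℝ) - (k'.1 i : ℝ)| := by exact_mod_cast h3
    have hx1 := ((hpt k).1 i).1
    have hx2 := ((hpt k).1 i).2
    have hy1 := ((hpt k').1 i).1
    have hy2 := ((hpt k').1 i).2
    have hgap : 2 * t ≤ |pt k i - pt k' i| := by
      rcases le_abs.mp hZ with h | h
      · refine le_trans ?_ (le_abs_self _)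
        nlinarith [mul_nonneg (show (0:ℝ) ≤ (k.1 i : ℝ) - (k'.1 i : ℝ) - 3 by linarith) htpos.le]
      · rw [abs_sub_comm]
        refine le_trans ?_ (le_abs_self _)
        nlinarith [mul_nonneg (show (0:ℝ) ≤ (k'.1 i : ℝ) - (k.1 i : ℝ) - 3 by linarith) htpos.le]
    apply Metric.ball_disjoint_ball
    have := abs_coord_le_dist (pt k) (pt k') i
    linarith
  have fiber_le : ∀ r : Fin n → ZMod 3,
      ∑' k : ↥(φ ⁻¹' {r}), μH[d] (E ∩ ball (pt k.1) t) ≤ μH[d] E := by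
    intro r
    have hpd : Pairwise (Function.onFun Disjoint fun k : ↥(φ ⁻¹' {r}) => ball (pt k.1) t) :=
      fun a b hab => hdisj a.1 b.1 (fun h => hab (Subtype.ext h)) (a.2.trans b.2.symm)
    calc ∑' k : ↥(φ ⁻¹' {r}), μH[d] (E ∩ ball (pt k.1) t)
        = ∑' k : ↥(φ ⁻¹' {r}), (μH[d]).restrict E (ball (pt k.1) t) := by
          refine tsum_congr fun k => ?_
          rw [Measure.restrict_apply measurableSet_ball, Set.inter_comm]
      _ = (μH[d]).restrict E (⋃ k : ↥(φ ⁻¹' {r}), ball (pt k.1) t) :=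
          (measure_iUnion hpd fun _ => measurableSet_ball).symm
      _ ≤ (μH[d]).restrict E Set.univ := measure_mono (Set.subset_univ _)
      _ = μH[d] E := Measure.restrict_apply_univ E
  have hsum : (∑' k, μH[d] (E ∩ ball (pt k) t)) ≤ (3 : ℝ≥0∞) ^ n * μH[d] E := by
    calc (∑' k, μH[d] (E ∩ ball (pt k) t))
        = ∑' p : Σ r : Fin n → ZMod 3, ↥(φ ⁻¹' {r}),
            μH[d] (E ∩ ball (pt p.2.1) t) :=
          ((Equiv.sigmaFiberEquiv φ).tsum_eq (fun k => μH[d] (E ∩ ball (pt k) t))).symm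
      _ = ∑' r : Fin n → ZMod 3, ∑' k : ↥(φ ⁻¹' {r}), μH[d] (E ∩ ball (pt k.1) t) :=
          ENNReal.tsum_sigma' _
      _ = ∑ r : Fin n → ZMod 3, ∑' k : ↥(φ ⁻¹' {r}), μH[d] (E ∩ ball (pt k.1) t) :=
          tsum_fintype _
      _ ≤ ∑ _r : Fin n → ZMod 3, μH[d] E := Finset.sum_le_sum fun r _ => fiber_le r
      _ = (Fintype.card (Fin n → ZMod 3)) • μH[d] E := by
          rw [Finset.sum_const, Finset.card_univ]
      _ = (3 : ℝ≥0∞) ^ n * μH[d] E := by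
          rw [nsmul_eq_mul, Fintype.card_fun]
          norm_num
  have hmul : ENNReal.ofReal c * (∑' k : {k : Fin n → ℤ // (dyC n m k ∩ E).Nonempty},
      ENNReal.ofReal t ^ d) ≤ (3 : ℝ≥0∞) ^ n * μH[d] E := by
    rw [← ENNReal.tsum_mul_left]
    exact le_trans (ENNReal.tsum_le_tsum key) hsum
  have hcne : (ENNReal.ofReal c) ≠ 0 := (ENNReal.ofReal_pos.mpr hc).ne'
  calc (∑' k : {k : Fin n → ℤ // (dyC n m k ∩ E).Nonempty}, ENNReal.ofReal t ^ d)
      = (ENNReal.ofReal c)⁻¹ * (ENNReal.ofReal c * ∑' k : {k : Fin n → ℤ // (dyC n m k ∩ E).Nonempty}, ENNReal.ofReal t ^ d) := by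
        rw [← mul_assoc, ENNReal.inv_mul_cancel hcne ENNReal.ofReal_ne_top, one_mul]
    _ ≤ (ENNReal.ofReal c)⁻¹ * ((3 : ℝ≥0∞) ^ n * μH[d] E) := mul_le_mul_right hmul _
    _ = ENNReal.ofReal (3 ^ n / c) * μH[d] E := by
        rw [← mul_assoc]
        congr 1
        rw [← ENNReal.ofReal_inv_of_pos hc]
        have h3 : (3 : ℝ≥0∞) ^ n = ENNReal.ofReal ((3 : ℝ) ^ n) := by
          rw [ENNReal.ofReal_pow (by norm_num)]
          norm_num
        rw [h3, ← ENNReal.ofReal_mul (by positivity)]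
        congr 1
        ring

end QCMGP
end
end

section
/- Let 1 ≤ d < n be integers, let E ⊆ ℝⁿ, let B = B(x,r) be a ball centered on E, and let 0 < ε < 1/12. Suppose there is a d-plane P with d_B(E,P) < ε. Then for all y, z ∈ E ∩ B(x, r/4), one has dist(2y−z, E) ≤ 4εr. In particular, if E is bilaterally ε-approximated by a d-plane in B, then the ball B(x, r/4) satisfies the 16ε-local symmetry condition for E. -/
open MeasureTheory Metric Set
open scoped ENNReal NNReal

noncomputable section

namespace QCMGP

lemma dist_two_smul_sub {V : Type*} [NormedAddCommGroup V] [NormedSpace ℝ V]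
    (a b c e : V) : dist ((2 : ℝ) • a - b) ((2 : ℝ) • c - e) ≤ 2 * dist a c + dist b e := by
  rw [dist_eq_norm]
  have h : ((2 : ℝ) • a - b) - ((2 : ℝ) • c - e) = (2 : ℝ) • (a - c) - (b - e) := by module
  rw [h]
  calc ‖(2 : ℝ) • (a - c) - (b - e)‖ ≤ ‖(2 : ℝ) • (a - c)‖ + ‖b - e‖ := norm_sub_le _ _
    _ ≤ 2 * dist a c + dist b e := by
        rw [norm_smul, dist_eq_norm, dist_eq_norm]
        simp [abs_of_nonneg]

theorem stmt15 (n d : ℕ) (hd1 : 1 ≤ d) (hdn : d < n) (E : Set (Euc n))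
    (x : Euc n) (r ε : ℝ) (hr : 0 < r) (hx : x ∈ E) (hε0 : 0 < ε)
    (hε : ε < 1 / 12) (P : AffineSubspace ℝ (Euc n)) (hP : IsPlane n d P)
    (hclose : ndist n x r E (P : Set (Euc n)) < ε) :
    (∀ y ∈ E ∩ ball x (r / 4), ∀ z ∈ E ∩ ball x (r / 4),
      Metric.infDist ((2 : ℝ) • y - z) E ≤ 4 * ε * r) ∧
    -- in particular, `B(x, r/4)` satisfies the `16ε`-local symmetry condition
    (∀ y ∈ E ∩ ball x (r / 4), ∀ z ∈ E ∩ ball x (r / 4),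
      Metric.infDist ((2 : ℝ) • y - z) E < 16 * ε * (r / 4)) := by
  obtain ⟨p₀, hp₀⟩ := hP.1
  set A := ⨆ y : ↥(E ∩ ball x r), Metric.infDist y.1 (P : Set (Euc n)) with hA
  set B := ⨆ y : ↥((P : Set (Euc n)) ∩ ball x r), Metric.infDist y.1 E with hB
  have hmax : max A B < ε * r := by
    have : r⁻¹ * max A B < ε := hclose
    calc max A B = r * (r⁻¹ * max A B) := by field_simp
      _ < r * ε := by exact mul_lt_mul_of_pos_left this hr
      _ = ε * r := mul_comm _ _
  have hbddA : BddAbove (Set.range fun y : ↥(E ∩ ball x r) =>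
      Metric.infDist y.1 (P : Set (Euc n))) := by
    refine ⟨r + dist x p₀, ?_⟩
    rintro _ ⟨⟨w, hw⟩, rfl⟩
    calc Metric.infDist w (P : Set (Euc n)) ≤ dist w p₀ := Metric.infDist_le_dist_of_mem hp₀
      _ ≤ dist w x + dist x p₀ := dist_triangle _ _ _
      _ ≤ r + dist x p₀ := by
          have := hw.2
          rw [mem_ball] at this
          linarith
  have hbddB : BddAbove (Set.range fun y : ↥((P : Set (Euc n)) ∩ ball x r) =>
      Metric.infDist y.1 E) := by
    refine ⟨r, ?_⟩
    rintro _ ⟨⟨w, hw⟩, rfl⟩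
    calc Metric.infDist w E ≤ dist w x := Metric.infDist_le_dist_of_mem hx
      _ ≤ r := by have := hw.2; rw [mem_ball] at this; linarith
  have hEP : ∀ w ∈ E ∩ ball x r, Metric.infDist w (P : Set (Euc n)) < ε * r := by
    intro w hw
    have := le_ciSup hbddA (⟨w, hw⟩ : ↥(E ∩ ball x r))
    exact lt_of_le_of_lt (this.trans (le_max_left A B)) hmax
  have hPE : ∀ w ∈ (P : Set (Euc n)) ∩ ball x r, Metric.infDist w E < ε * r := by
    intro w hw
    have := le_ciSup hbddB (⟨w, hw⟩ : ↥((P : Set (Euc n)) ∩ ball x r))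
    exact lt_of_le_of_lt (this.trans (le_max_right A B)) hmax
  have key : ∀ y ∈ E ∩ ball x (r / 4), ∀ z ∈ E ∩ ball x (r / 4),
      Metric.infDist ((2 : ℝ) • y - z) E < 4 * ε * r := by
    intro y hy z hz
    have hyr : y ∈ E ∩ ball x r :=
      ⟨hy.1, mem_ball.mpr (lt_of_lt_of_le (mem_ball.mp hy.2) (by linarith))⟩
    have hzr : z ∈ E ∩ ball x r :=
      ⟨hz.1, mem_ball.mpr (lt_of_lt_of_le (mem_ball.mp hz.2) (by linarith))⟩
    obtain ⟨y', hy'P, hy'd⟩ := (Metric.infDist_lt_iff ⟨p₀, hp₀⟩).mp (hEP y hyr)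
    obtain ⟨z', hz'P, hz'd⟩ := (Metric.infDist_lt_iff ⟨p₀, hp₀⟩).mp (hEP z hzr)
    set w := (2 : ℝ) • y' - z' with hw
    have hwP : w ∈ (P : Set (Euc n)) := by
      have := AffineSubspace.smul_vsub_vadd_mem P (2 : ℝ) hy'P hz'P hz'P
      have heq : (2 : ℝ) • (y' -ᵥ z') +ᵥ z' = w := by
        simp only [vsub_eq_sub, vadd_eq_add, hw]; module
      rwa [heq] at this
    have hdw : dist ((2 : ℝ) • y - z) w ≤ 2 * dist y y' + dist z z' :=
      dist_two_smul_sub y z y' z'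
    have hdyz : dist ((2 : ℝ) • y - z) x < 3 * (r / 4) := by
      have h1 : dist ((2 : ℝ) • y - z) x ≤ 2 * dist y x + dist z x := by
        have : (x : Euc n) = (2 : ℝ) • x - x := by module
        calc dist ((2 : ℝ) • y - z) x = dist ((2 : ℝ) • y - z) ((2 : ℝ) • x - x) := by
              rw [← this]
          _ ≤ 2 * dist y x + dist z x := dist_two_smul_sub y z x x
      have h2 : dist y x < r / 4 := mem_ball.mp hy.2
      have h3 : dist z x < r / 4 := mem_ball.mp hz.2
      linarith
    have hwball : w ∈ ball x r := by
      rw [mem_ball]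
      calc dist w x ≤ dist w ((2 : ℝ) • y - z) + dist ((2 : ℝ) • y - z) x := dist_triangle _ _ _
        _ < (2 * dist y y' + dist z z') + 3 * (r / 4) := by
            rw [dist_comm] at hdw; linarith
        _ < (2 * (ε * r) + ε * r) + 3 * (r / 4) := by linarith
        _ ≤ r := by nlinarith
    have hwE : Metric.infDist w E < ε * r := hPE w ⟨hwP, hwball⟩
    calc Metric.infDist ((2 : ℝ) • y - z) E
        ≤ Metric.infDist w E + dist ((2 : ℝ) • y - z) w :=
          Metric.infDist_le_infDist_add_dist
      _ < ε * r + (2 * (ε * r) + ε * r) := by linarith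
      _ = 4 * ε * r := by ring
  refine ⟨fun y hy z hz => (key y hy z hz).le, fun y hy z hz => ?_⟩
  have := key y hy z hz
  linarith

end QCMGP
end
end
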